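/- For every positive integer n and every complex number z, ∑_{k=0}^{n} (-1)^k · 2^{2k} · (4k+1) · C(4n+1,4k+1) · E_{4k}(z) = ∑_{k=0}^{n-1} (-1)^k · 2^{2k+1} · C(4n+1,4k+2) · B_{4k+2}(z) + ∑_{k=0}^{n} (-1)^k · 2^{2k} · C(4n+1,4k) · B_{4k}(z), where C(n,k) denotes the binomial coefficient. -/

import Mathlib

open Finset

/-- The Bernoulli polynomial `B_n` evaluated at a complex number `z`,
with generating function `t·e^{zt}/(e^t−1) = ∑_{n≥0} B_n(z)·t^n/n!`. -/
noncomputable def bernoulliPoly (n : ℕ) (z : ℂ) : ℂ :=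
  Polynomial.aeval z (Polynomial.bernoulli n)

/-- The Euler polynomial `E_n` evaluated at a complex number `z`,
with generating function `2·e^{zt}/(e^t+1) = ∑_{n≥0} E_n(z)·t^n/n!`,
given by the explicit formula `E_n(z) = ∑_{k=0}^n 2^{-k} ∑_{j=0}^k (-1)^j C(k,j)(z+j)^n`. -/
noncomputable def eulerPoly (n : ℕ) (z : ℂ) : ℂ :=
  ∑ k ∈ range (n + 1), (1 / 2 ^ k : ℂ) *
    ∑ j ∈ range (k + 1), (-1) ^ j * (k.choose j : ℂ) * (z + j) ^ n

open Polynomial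


lemma poly_periodic (p : ℂ[X]) (c : ℂ) (hc : c ≠ 0)
    (h : ∀ z : ℂ, p.eval (z + c) = p.eval z) : ∀ z : ℂ, p.eval z = p.eval 0 := by
  have key : ∀ m : ℕ, (p - C (p.eval 0)).eval (m * c) = 0 := by
    intro m
    induction m with
    | zero => simp
    | succ k ih =>
      have : ((k:ℂ) + 1) * c = (k : ℂ) * c + c := by ring
      simp only [Nat.cast_succ, this, eval_sub, eval_C, h]
      simpa using ih
  have hz : p - C (p.eval 0) = 0 := by
    apply Polynomial.eq_zero_of_infinite_isRoot
    apply Set.Infinite.mono (s := Set.range (fun m : ℕ => (m : ℂ) * c))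
    · rintro x ⟨m, rfl⟩
      exact key m
    · exact Set.infinite_range_of_injective (fun a b hab => by
        have := mul_right_cancel₀ hc hab; exact_mod_cast this)
  intro z
  have := congrArg (Polynomial.eval z) hz
  simpa [sub_eq_zero] using this

lemma poly_anti (p : ℂ[X]) (h : ∀ z : ℂ, p.eval (z + 1) = - p.eval z) :
    ∀ z : ℂ, p.eval z = 0 := by
  have h2 : ∀ z : ℂ, p.eval (z + 2) = p.eval z := by
    intro z
    have := h (z + 1)
    rw [h z] at this
    rw [show z + 2 = z + 1 + 1 by ring]; simpa using this
  have hper := poly_periodic p 2 two_ne_zero h2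
  have h0 : p.eval 0 = 0 := by
    have h1 := h 0
    rw [zero_add, hper 1] at h1
    have : (2:ℂ) * p.eval 0 = 0 := by linear_combination h1
    simpa using this
  intro z; rw [hper z, h0]

/-- complex Bernoulli polynomial -/
noncomputable def Bc (n : ℕ) : ℂ[X] := (Polynomial.bernoulli n).map (algebraMap ℚ ℂ)

lemma Bc_eval (n : ℕ) (z : ℂ) : (Bc n).eval z = bernoulliPoly n z := by
  simp [Bc, bernoulliPoly, Polynomial.aeval_def, Polynomial.eval_map]

lemma bernoulli_comp_rat (n : ℕ) :
    (Polynomial.bernoulli n).comp (X + C 1) =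
      Polynomial.bernoulli n + (n : ℚ) • X ^ (n - 1) := by
  apply Polynomial.funext
  intro x
  have := Polynomial.bernoulli_eval_one_add n x
  simp only [eval_comp, eval_add, eval_X, eval_C, eval_smul, eval_pow, smul_eq_mul]
  rw [show x + 1 = 1 + x by ring, this]

lemma bernoulliPoly_succ (n : ℕ) (z : ℂ) :
    bernoulliPoly n (z + 1) = bernoulliPoly n z + n * z ^ (n - 1) := by
  have h := congrArg (fun p => Polynomial.eval z (p.map (algebraMap ℚ ℂ))) (bernoulli_comp_rat n)
  simp only [Polynomial.map_comp, Polynomial.map_add, Polynomial.map_smul, Polynomial.map_pow,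
    Polynomial.map_X, Polynomial.map_C, eval_comp, eval_add, eval_X, eval_C, eval_smul,
    eval_pow, smul_eq_mul, map_one] at h
  rw [← Bc_eval, ← Bc_eval, Bc]
  simpa using h

lemma bernoulliPoly_zero_eval (n : ℕ) : bernoulliPoly n 0 = ((bernoulli n : ℚ) : ℂ) := by
  rw [← Bc_eval, Bc, Polynomial.eval_zero_map, Polynomial.bernoulli_eval_zero]
  simp

lemma bernoulliPoly_def_sum (N : ℕ) (y : ℂ) :
    bernoulliPoly N y =
      ∑ i ∈ range (N + 1), ((bernoulli i : ℚ) : ℂ) * (N.choose i : ℂ) * y ^ (N - i) := by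
  simp [bernoulliPoly, Polynomial.bernoulli, map_sum, Polynomial.aeval_monomial, mul_assoc]

lemma binom_deriv (N : ℕ) (x y : ℂ) :
    ∑ m ∈ range (N + 1), (N.choose m : ℂ) * (m : ℂ) * x ^ (m - 1) * y ^ (N - m)
      = (N : ℂ) * (x + y) ^ (N - 1) := by
  cases N with
  | zero => simp
  | succ M =>
    rw [Finset.sum_range_succ']
    have step : ∀ j ∈ range (M + 1),
        ((M+1).choose (j+1) : ℂ) * ((j+1 : ℕ) : ℂ) * x ^ (j+1-1) * y ^ (M+1-(j+1))
          = (M+1 : ℂ) * ((M.choose j : ℂ) * x ^ j * y ^ (M - j)) := by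
      intro j _
      have h := Nat.add_one_mul_choose_eq M j
      have h2 : ((M.succ * M.choose j : ℕ) : ℂ) = ((M.succ.choose j.succ * j.succ : ℕ) : ℂ) :=
        congrArg (Nat.cast : ℕ → ℂ) h
      push_cast at h2
      rw [show (j+1-1) = j from rfl, show (M+1-(j+1)) = M - j from by omega]
      push_cast
      linear_combination (-(x ^ j * y ^ (M - j))) * h2
    rw [Finset.sum_congr rfl step]
    rw [← Finset.mul_sum, Commute.add_pow (Commute.all x y)]
    simp only [Nat.cast_zero, mul_zero, zero_mul, add_zero, Nat.choose_zero_right,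
      Nat.add_sub_cancel]
    push_cast
    rw [Finset.sum_congr rfl (fun j _ => by ring :
      ∀ j ∈ range (M+1), (M.choose j : ℂ) * x ^ j * y ^ (M - j)
        = x ^ j * y ^ (M - j) * (M.choose j : ℂ))]

lemma bernoulliPoly_add (N : ℕ) (x y : ℂ) :
    bernoulliPoly N (x + y) =
      ∑ m ∈ range (N + 1), (N.choose m : ℂ) * bernoulliPoly m x * y ^ (N - m) := by
  set p : ℂ[X] := (Bc N).comp (X + C y)
      - ∑ m ∈ range (N + 1), C ((N.choose m : ℂ) * y ^ (N - m)) * Bc m with hp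
  have hev : ∀ x : ℂ, p.eval x = bernoulliPoly N (x + y)
      - ∑ m ∈ range (N + 1), (N.choose m : ℂ) * bernoulliPoly m x * y ^ (N - m) := by
    intro x
    simp only [hp, eval_sub, eval_comp, eval_add, eval_X, eval_C, eval_finset_sum, eval_mul,
      Bc_eval]
    ring_nf
  have hper : ∀ x : ℂ, p.eval (x + 1) = p.eval x := by
    intro x
    rw [hev, hev]
    have h1 : bernoulliPoly N (x + 1 + y) = bernoulliPoly N (x + y) + N * (x+y) ^ (N - 1) := by
      rw [show x + 1 + y = (x + y) + 1 by ring, bernoulliPoly_succ]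
    rw [h1]
    have h2 : ∑ m ∈ range (N + 1), (N.choose m : ℂ) * bernoulliPoly m (x+1) * y ^ (N - m)
        = ∑ m ∈ range (N + 1), ((N.choose m : ℂ) * bernoulliPoly m x * y ^ (N - m)
            + (N.choose m : ℂ) * (m : ℂ) * x ^ (m-1) * y ^ (N - m)) := by
      apply Finset.sum_congr rfl
      intro m _
      rw [bernoulliPoly_succ]
      ring
    rw [h2, Finset.sum_add_distrib, binom_deriv]
    ring
  have h0 : p.eval 0 = 0 := by
    rw [hev, zero_add, bernoulliPoly_def_sum]
    rw [sub_eq_zero]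
    apply Finset.sum_congr rfl
    intro m _
    rw [bernoulliPoly_zero_eval]
    ring
  have := poly_periodic p 1 one_ne_zero hper x
  rw [h0, hev, sub_eq_zero] at this
  exact this

lemma bernoulli_odd_zero {M : ℕ} (hM : Odd M) (h1 : M ≠ 1) : _root_.bernoulli M = 0 := by
  rw [bernoulli_eq_bernoulli'_of_ne_one h1]
  apply bernoulli'_eq_zero_of_odd hM
  rcases hM with ⟨k, rfl⟩
  omega

lemma bernoulliPoly_one_eval (M : ℕ) (h : M ≠ 1) :
    bernoulliPoly M 1 = ((bernoulli M : ℚ) : ℂ) := by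
  have := bernoulliPoly_succ M 0
  rw [zero_add, bernoulliPoly_zero_eval] at this
  rcases Nat.eq_zero_or_pos M with h0 | h0
  · subst h0; simpa using this
  · rw [this, zero_pow (by omega), mul_zero, add_zero]

lemma bernoulliPoly_reflect {M : ℕ} (hM : Odd M) (z : ℂ) :
    bernoulliPoly M (1 - z) = - bernoulliPoly M z := by
  by_cases h1 : M = 1
  · subst h1
    rw [bernoulliPoly_def_sum, bernoulliPoly_def_sum]
    simp only [Finset.sum_range_succ, Finset.sum_range_zero, _root_.bernoulli_one, _root_.bernoulli_zero]
    norm_num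
    ring
  · set p : ℂ[X] := (Bc M).comp (C 1 - X) + Bc M with hp
    have hev : ∀ z : ℂ, p.eval z = bernoulliPoly M (1 - z) + bernoulliPoly M z := by
      intro z
      simp [hp, eval_comp, Bc_eval]
    have heven : Even (M - 1) := by rcases hM with ⟨k, rfl⟩; exact ⟨k, by omega⟩
    have hper : ∀ z : ℂ, p.eval (z + 1) = p.eval z := by
      intro z
      rw [hev, hev]
      have e1 : (1 : ℂ) - (z + 1) = -z := by ring
      have e2 : (1 : ℂ) - z = -z + 1 := by ring
      rw [e1, e2, bernoulliPoly_succ M (-z), bernoulliPoly_succ M z, heven.neg_pow]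
      ring
    have h0 : p.eval 0 = 0 := by
      rw [hev]
      rw [sub_zero, bernoulliPoly_one_eval M h1, bernoulliPoly_zero_eval,
        bernoulli_odd_zero hM h1]
      norm_num
    have := poly_periodic p 1 one_ne_zero hper z
    rw [h0, hev] at this
    linear_combination this
  
lemma bernoulliPoly_half_zero {M : ℕ} (hM : Odd M) : bernoulliPoly M (1/2 : ℂ) = 0 := by
  have := bernoulliPoly_reflect hM (1/2 : ℂ)
  norm_num at this
  linear_combination (1/2 : ℂ) * this

lemma bernoulliPoly_mul_two {M : ℕ} (hM : Odd M) (z : ℂ) :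
    bernoulliPoly M (2 * z) = 2 ^ (M - 1) * (bernoulliPoly M z + bernoulliPoly M (z + 1/2)) := by
  set p : ℂ[X] := (Bc M).comp (C 2 * X)
      - C ((2:ℂ) ^ (M - 1)) * (Bc M + (Bc M).comp (X + C (1/2))) with hp
  have hev : ∀ z : ℂ, p.eval z = bernoulliPoly M (2 * z)
      - 2 ^ (M-1) * (bernoulliPoly M z + bernoulliPoly M (z + 1/2)) := by
    intro z
    simp [hp, eval_comp, Bc_eval]
  have hper : ∀ z : ℂ, p.eval (z + 1/2) = p.eval z := by
    intro z
    rw [hev, hev]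
    have e1 : (2 : ℂ) * (z + 1/2) = 2 * z + 1 := by ring
    have e2 : z + 1/2 + 1/2 = z + 1 := by ring
    rw [e1, e2, bernoulliPoly_succ M (2*z), bernoulliPoly_succ M z, mul_pow]
    ring
  have hb : ((bernoulli M : ℚ) : ℂ) = 2 ^ (M-1) * ((bernoulli M : ℚ) : ℂ) := by
    by_cases h1 : M = 1
    · subst h1; norm_num
    · rw [bernoulli_odd_zero hM h1]; norm_num
  have h0 : p.eval 0 = 0 := by
    rw [hev]
    norm_num [bernoulliPoly_zero_eval, bernoulliPoly_half_zero hM]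
    linear_combination hb
  have := poly_periodic p (1/2) (by norm_num) hper z
  rw [h0, hev, sub_eq_zero] at this
  exact this

/-- signed k-th finite difference sum of (z+j)^n -/
noncomputable def Sdiff (n k : ℕ) (z : ℂ) : ℂ :=
  ∑ j ∈ range (k + 1), (-1) ^ j * (k.choose j : ℂ) * (z + j) ^ n

noncomputable def Sdiffp (n k : ℕ) : ℂ[X] :=
  ∑ j ∈ range (k + 1), Polynomial.C ((-1 : ℂ) ^ j * (k.choose j : ℂ)) * (X + C (j : ℂ)) ^ n

lemma Sdiffp_eval (n k : ℕ) (z : ℂ) : (Sdiffp n k).eval z = Sdiff n k z := by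
  simp [Sdiffp, Sdiff, eval_finset_sum]

lemma Sdiff_pascal (n k : ℕ) (z : ℂ) :
    Sdiff n (k + 1) z = Sdiff n k z - Sdiff n k (z + 1) := by
  unfold Sdiff
  rw [Finset.sum_range_succ' (fun j => (-1:ℂ) ^ j * ((k+1).choose j : ℂ) * (z + j) ^ n) (k+1)]
  have hB : ∑ j ∈ range (k + 1), (-1:ℂ) ^ j * (k.choose j : ℂ) * (z + 1 + j) ^ n
      = ∑ j ∈ range (k + 1), (-1:ℂ) ^ j * (k.choose j : ℂ) * (z + (j+1 : ℕ)) ^ n := by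
    apply Finset.sum_congr rfl; intro j _; push_cast; ring_nf
  rw [hB]
  have hA : ∑ j ∈ range (k + 1), (-1:ℂ) ^ j * (k.choose j : ℂ) * (z + j) ^ n
      = (∑ j ∈ range k, (-1:ℂ) ^ (j+1) * (k.choose (j+1) : ℂ) * (z + ((j+1 : ℕ) : ℂ)) ^ n)
        + (z + ((0:ℕ):ℂ)) ^ n := by
    rw [Finset.sum_range_succ' (fun j => (-1:ℂ) ^ j * (k.choose j : ℂ) * (z + j) ^ n) k]
    norm_num
  rw [hA]
  have split : ∀ j ∈ range (k+1), (-1:ℂ) ^ (j+1) * (((k+1).choose (j+1)) : ℂ)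
        * (z + ((j+1:ℕ):ℂ)) ^ n
      = (-1:ℂ) ^ (j+1) * ((k.choose j : ℂ) + (k.choose (j+1) : ℂ)) * (z + ((j+1:ℕ):ℂ)) ^ n := by
    intro j _
    rw [Nat.choose_succ_succ]
    push_cast
    ring
  rw [Finset.sum_congr rfl split]
  have expand : ∑ j ∈ range (k+1), (-1:ℂ) ^ (j+1) * ((k.choose j : ℂ) + (k.choose (j+1) : ℂ))
        * (z + ((j+1:ℕ):ℂ)) ^ n
      = (∑ j ∈ range (k+1), (-1:ℂ) ^ (j+1) * (k.choose j : ℂ) * (z + ((j+1:ℕ):ℂ)) ^ n)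
        + ∑ j ∈ range (k+1), (-1:ℂ) ^ (j+1) * (k.choose (j+1) : ℂ) * (z + ((j+1:ℕ):ℂ)) ^ n := by
    rw [← Finset.sum_add_distrib]
    apply Finset.sum_congr rfl; intro j _; ring
  rw [expand]
  have last : ∑ j ∈ range (k+1), (-1:ℂ) ^ (j+1) * (k.choose (j+1) : ℂ) * (z + ((j+1:ℕ):ℂ)) ^ n
      = ∑ j ∈ range k, (-1:ℂ) ^ (j+1) * (k.choose (j+1) : ℂ) * (z + ((j+1:ℕ):ℂ)) ^ n := by
    rw [Finset.sum_range_succ]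
    simp
  rw [last]
  have neg : ∑ j ∈ range (k+1), (-1:ℂ) ^ (j+1) * (k.choose j : ℂ) * (z + ((j+1:ℕ):ℂ)) ^ n
      = - ∑ j ∈ range (k+1), (-1:ℂ) ^ j * (k.choose j : ℂ) * (z + ((j+1:ℕ):ℂ)) ^ n := by
    rw [← Finset.sum_neg_distrib]
    apply Finset.sum_congr rfl; intro j _; ring
  rw [neg]
  simp only [Nat.choose_zero_right, Nat.cast_one, one_mul, Nat.cast_zero, add_zero]
  push_cast
  ring

lemma Sdiffp_pascal (n k : ℕ) :
    Sdiffp n (k + 1) = Sdiffp n k - (Sdiffp n k).comp (X + C 1) := by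
  apply Polynomial.funext
  intro z
  rw [eval_sub, eval_comp]
  simp only [eval_add, eval_X, eval_C, Sdiffp_eval]
  exact Sdiff_pascal n k z

lemma comp_linear_ne_zero {p : ℂ[X]} (hp : p ≠ 0) (r : ℂ) : p.comp (X + C r) ≠ 0 := by
  intro h
  apply hp
  have := congrArg (fun q => q.comp (X + C (-r))) h
  simpa [Polynomial.comp_assoc, Polynomial.comp_assoc, zero_comp, comp_assoc,
    add_comp, X_comp, C_comp] using this

lemma Sdiff_vanish (n : ℕ) (z : ℂ) : Sdiff n (n + 1) z = 0 := by
  have key : ∀ k, Sdiffp n k = 0 ∨ (Sdiffp n k).natDegree + k ≤ n := by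
    intro k
    induction k with
    | zero =>
      right
      simp only [add_zero]
      apply Polynomial.natDegree_sum_le_of_forall_le
      intro j _
      refine le_trans (Polynomial.natDegree_mul_le) ?_
      rw [Polynomial.natDegree_C, Polynomial.natDegree_pow, Polynomial.natDegree_X_add_C,
        mul_one, zero_add]
    | succ k ih =>
      rcases ih with h0 | hd
      · left
        rw [Sdiffp_pascal, h0]
        simp
      · by_cases hz : Sdiffp n k = 0
        · left; rw [Sdiffp_pascal, hz]; simp
        · by_cases hdeg : (Sdiffp n k).natDegree = 0
          · left
            obtain ⟨a, ha⟩ := Polynomial.natDegree_eq_zero.mp hdeg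
            rw [Sdiffp_pascal, ← ha]
            simp
          · have hcomp := comp_linear_ne_zero hz (1 : ℂ)
            have hnd : ((Sdiffp n k).comp (X + C 1)).natDegree = (Sdiffp n k).natDegree := by
              rw [Polynomial.natDegree_comp, Polynomial.natDegree_X_add_C, mul_one]
            have hdeq : (Sdiffp n k).degree = ((Sdiffp n k).comp (X + C 1)).degree := by
              rw [Polynomial.degree_eq_natDegree hz, Polynomial.degree_eq_natDegree hcomp, hnd]
            have hlc : (Sdiffp n k).leadingCoeff = ((Sdiffp n k).comp (X + C 1)).leadingCoeff := by
              rw [Polynomial.leadingCoeff_comp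
                  (by rw [Polynomial.natDegree_X_add_C]; exact one_ne_zero),
                Polynomial.leadingCoeff_X_add_C, one_pow, mul_one]
            have hlt := Polynomial.degree_sub_lt hdeq hz hlc
            rw [← Sdiffp_pascal] at hlt
            by_cases hz' : Sdiffp n (k+1) = 0
            · left; exact hz'
            · right
              have := Polynomial.natDegree_lt_natDegree hz' hlt
              omega
  rcases key (n+1) with h | h
  · rw [← Sdiffp_eval, h, eval_zero]
  · omega

lemma eulerPoly_eq_sum (n : ℕ) (z : ℂ) :
    eulerPoly n z = ∑ k ∈ range (n + 1), (1 / 2 ^ k : ℂ) * Sdiff n k z := rfl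

lemma eulerPoly_funeq (n : ℕ) (z : ℂ) :
    eulerPoly n (z + 1) + eulerPoly n z = 2 * z ^ n := by
  rw [eulerPoly_eq_sum, eulerPoly_eq_sum]
  have step : ∀ k ∈ range (n+1), (1 / 2 ^ k : ℂ) * Sdiff n k (z+1)
      = 2 * ((1 / 2 ^ k) * Sdiff n k z) - 2 * ((1 / 2 ^ (k+1)) * Sdiff n (k+1) z)
        - (1 / 2 ^ k) * Sdiff n k z := by
    intro k _
    have h := Sdiff_pascal n k z
    linear_combination ((1 / 2 ^ k : ℂ)) * h
  rw [Finset.sum_congr rfl step]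
  simp only [Finset.sum_sub_distrib]
  rw [← Finset.mul_sum, ← Finset.mul_sum]
  have htel : ∑ k ∈ range (n+1), (1 / 2 ^ (k+1) : ℂ) * Sdiff n (k+1) z
      = ∑ k ∈ range (n+1), (1 / 2 ^ k : ℂ) * Sdiff n k z
        + (1 / 2 ^ (n+1)) * Sdiff n (n+1) z - (1 / 2 ^ 0) * Sdiff n 0 z := by
    have h1 := Finset.sum_range_succ' (fun k => (1 / 2 ^ k : ℂ) * Sdiff n k z) (n+1)
    have h2 := Finset.sum_range_succ (fun k => (1 / 2 ^ k : ℂ) * Sdiff n k z) (n+1)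
    rw [h2] at h1
    linear_combination -h1
  rw [htel, Sdiff_vanish]
  have h0 : Sdiff n 0 z = z ^ n := by simp [Sdiff]
  rw [h0]
  ring

noncomputable def EP (n : ℕ) : ℂ[X] :=
  ∑ k ∈ range (n + 1), C ((1 / 2 ^ k : ℂ)) * Sdiffp n k

lemma EP_eval (n : ℕ) (z : ℂ) : (EP n).eval z = eulerPoly n z := by
  simp [EP, Sdiffp, eulerPoly, eval_finset_sum]

lemma euler_bernoulli {m : ℕ} (hm : Even m) (z : ℂ) :
    ((m : ℂ) + 1) * eulerPoly m z
      = 2 * bernoulliPoly (m+1) z - 2 ^ (m+2) * bernoulliPoly (m+1) (z/2) := by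
  have hodd : Odd (m + 1) := Even.add_one hm
  set p : ℂ[X] := C ((m : ℂ) + 1) * EP m
      - (C 2 * Bc (m+1) - C ((2:ℂ)^(m+2)) * (Bc (m+1)).comp (C (1/2) * X)) with hp
  have hev : ∀ z : ℂ, p.eval z = ((m : ℂ) + 1) * eulerPoly m z
      - (2 * bernoulliPoly (m+1) z - 2 ^ (m+2) * bernoulliPoly (m+1) (z/2)) := by
    intro z
    simp only [hp, eval_sub, eval_mul, eval_C, eval_comp, eval_X, Bc_eval, EP_eval]
    rw [show (1:ℂ)/2 * z = z / 2 by ring]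
  have hper : ∀ z : ℂ, p.eval (z + 1) = - p.eval z := by
    intro z
    rw [hev, hev]
    have h1 : eulerPoly m (z + 1) = 2 * z ^ m - eulerPoly m z := by
      linear_combination eulerPoly_funeq m z
    have h2 := bernoulliPoly_succ (m+1) z
    have h3 : bernoulliPoly (m+1) ((z+1)/2) = bernoulliPoly (m+1) (z/2 + 1/2) := by
      norm_num [add_div]
    have h4 := bernoulliPoly_mul_two hodd (z/2)
    rw [show 2 * (z/2) = z by ring, show (m+1) - 1 = m from rfl] at h4
    rw [h1, h2, h3, show (m+1) - 1 = m from rfl]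
    push_cast
    linear_combination (-4:ℂ) * h4
  have := poly_anti p hper z
  rw [hev, sub_eq_zero] at this
  exact this

lemma sum_split4 (n : ℕ) (g : ℕ → ℂ) :
    ∑ m ∈ range (4*n+2), g m
      = ∑ k ∈ range (n+1), g (4*k) + ∑ k ∈ range (n+1), g (4*k+1)
        + ∑ k ∈ range n, g (4*k+2) + ∑ k ∈ range n, g (4*k+3) := by
  induction n with
  | zero => simp [Finset.sum_range_succ]
  | succ m ih =>
    rw [show 4*(m+1)+2 = (4*m+2)+1+1+1+1 from by ring]
    rw [Finset.sum_range_succ g ((4*m+2)+1+1+1), Finset.sum_range_succ g ((4*m+2)+1+1),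
      Finset.sum_range_succ g ((4*m+2)+1), Finset.sum_range_succ g (4*m+2), ih]
    rw [Finset.sum_range_succ (fun k => g (4*k)) (m+1),
      Finset.sum_range_succ (fun k => g (4*k+1)) (m+1),
      Finset.sum_range_succ (fun k => g (4*k+2)) m,
      Finset.sum_range_succ (fun k => g (4*k+3)) m]
    rw [show 4*m+2+1 = 4*m+3 from by omega, show 4*m+2+1+1 = 4*(m+1) from by omega]
    ring

lemma modfour (n : ℕ) (x ω v σ : ℂ) (h4 : ω^4 = σ) (hv : ω * v = 1) :
    ∑ k ∈ range (n+1), ((4*n+1).choose (4*k) : ℂ) * bernoulliPoly (4*k) x * σ^k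
    + ω * ∑ k ∈ range (n+1), ((4*n+1).choose (4*k+1) : ℂ) * bernoulliPoly (4*k+1) x * σ^k
    + ω^2 * ∑ k ∈ range n, ((4*n+1).choose (4*k+2) : ℂ) * bernoulliPoly (4*k+2) x * σ^k
    + ω^3 * ∑ k ∈ range n, ((4*n+1).choose (4*k+3) : ℂ) * bernoulliPoly (4*k+3) x * σ^k
    = σ^n * ω * bernoulliPoly (4*n+1) (x + v) := by
  have key : ∑ m ∈ range (4*n+2), ((4*n+1).choose m : ℂ) * bernoulliPoly m x * ω^m
      = ω^(4*n+1) * bernoulliPoly (4*n+1) (x + v) := by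
    rw [show 4*n+2 = (4*n+1)+1 from rfl]
    rw [bernoulliPoly_add (4*n+1) x v, Finset.mul_sum]
    apply Finset.sum_congr rfl
    intro m hm
    have hm' : m ≤ 4*n+1 := by
      have := Finset.mem_range.mp hm; omega
    have hsplit : ω^(4*n+1) = ω^m * ω^(4*n+1-m) := by
      rw [← pow_add]; congr 1; omega
    rw [hsplit]
    have hv' : ω^(4*n+1-m) * v^(4*n+1-m) = 1 := by
      rw [← mul_pow, hv, one_pow]
    linear_combination (-(((4*n+1).choose m : ℂ) * bernoulliPoly m x * ω^m)) * hv'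
  rw [sum_split4 n (fun m => ((4*n+1).choose m : ℂ) * bernoulliPoly m x * ω^m)] at key
  have c0 : ∑ k ∈ range (n+1), ((4*n+1).choose (4*k) : ℂ) * bernoulliPoly (4*k) x * ω^(4*k)
      = ∑ k ∈ range (n+1), ((4*n+1).choose (4*k) : ℂ) * bernoulliPoly (4*k) x * σ^k := by
    apply Finset.sum_congr rfl; intro k _; rw [pow_mul, h4]
  have c1 : ∑ k ∈ range (n+1), ((4*n+1).choose (4*k+1) : ℂ) * bernoulliPoly (4*k+1) x * ω^(4*k+1)
      = ω * ∑ k ∈ range (n+1), ((4*n+1).choose (4*k+1) : ℂ) * bernoulliPoly (4*k+1) x * σ^k := by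
    rw [Finset.mul_sum]; apply Finset.sum_congr rfl; intro k _
    rw [pow_add, pow_mul, h4, pow_one]; ring
  have c2 : ∑ k ∈ range n, ((4*n+1).choose (4*k+2) : ℂ) * bernoulliPoly (4*k+2) x * ω^(4*k+2)
      = ω^2 * ∑ k ∈ range n, ((4*n+1).choose (4*k+2) : ℂ) * bernoulliPoly (4*k+2) x * σ^k := by
    rw [Finset.mul_sum]; apply Finset.sum_congr rfl; intro k _
    rw [pow_add, pow_mul, h4]; ring
  have c3 : ∑ k ∈ range n, ((4*n+1).choose (4*k+3) : ℂ) * bernoulliPoly (4*k+3) x * ω^(4*k+3)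
      = ω^3 * ∑ k ∈ range n, ((4*n+1).choose (4*k+3) : ℂ) * bernoulliPoly (4*k+3) x * σ^k := by
    rw [Finset.mul_sum]; apply Finset.sum_congr rfl; intro k _
    rw [pow_add, pow_mul, h4]; ring
  have cN : ω^(4*n+1) = σ^n * ω := by rw [pow_add, pow_mul, h4, pow_one]
  rw [c0, c1, c2, c3, cN] at key
  exact key


theorem stmt14 (n : ℕ) (hn : 0 < n) (z : ℂ) :
    ∑ k ∈ range (n + 1), (-1 : ℂ) ^ k * 2 ^ (2 * k) * (4 * (k : ℂ) + 1) *
        ((4 * n + 1).choose (4 * k + 1) : ℂ) * eulerPoly (4 * k) z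
      = ∑ k ∈ range n, (-1 : ℂ) ^ k * 2 ^ (2 * k + 1) *
          ((4 * n + 1).choose (4 * k + 2) : ℂ) * bernoulliPoly (4 * k + 2) z
        + ∑ k ∈ range (n + 1), (-1 : ℂ) ^ k * 2 ^ (2 * k) *
          ((4 * n + 1).choose (4 * k) : ℂ) * bernoulliPoly (4 * k) z := by
  set I := Complex.I with hIdef
  have hI : I^2 = -1 := Complex.I_sq
  have e4 : ∀ k : ℕ, (-4:ℂ)^k = (-1)^k * 2^(2*k) := by
    intro k
    rw [show ((-4):ℂ) = (-1) * 2^2 from by norm_num, mul_pow, ← pow_mul]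
  have e64 : ∀ k : ℕ, (-64:ℂ)^k = (-1)^k * 2^(6*k) := by
    intro k
    rw [show ((-64):ℂ) = (-1) * 2^6 from by norm_num, mul_pow, ← pow_mul]
  -- rewrite LHS
  have hL : ∑ k ∈ range (n + 1), (-1 : ℂ) ^ k * 2 ^ (2 * k) * (4 * (k : ℂ) + 1) *
        ((4 * n + 1).choose (4 * k + 1) : ℂ) * eulerPoly (4 * k) z
      = 2 * (∑ k ∈ range (n+1), ((4*n+1).choose (4*k+1) : ℂ) * bernoulliPoly (4*k+1) z * (-4:ℂ)^k)
        - 4 * (∑ k ∈ range (n+1), ((4*n+1).choose (4*k+1) : ℂ) * bernoulliPoly (4*k+1) (z/2) * (-64:ℂ)^k) := by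
    rw [Finset.mul_sum, Finset.mul_sum, ← Finset.sum_sub_distrib]
    apply Finset.sum_congr rfl
    intro k _
    have h := euler_bernoulli (⟨2*k, by ring⟩ : Even (4*k)) z
    push_cast at h
    rw [e4 k, e64 k]
    linear_combination ((-1:ℂ)^k * 2^(2*k) * ((4*n+1).choose (4*k+1) : ℂ)) * h
  have hR1 : ∑ k ∈ range n, (-1 : ℂ) ^ k * 2 ^ (2 * k + 1) *
        ((4 * n + 1).choose (4 * k + 2) : ℂ) * bernoulliPoly (4 * k + 2) z
      = 2 * ∑ k ∈ range n, ((4*n+1).choose (4*k+2) : ℂ) * bernoulliPoly (4*k+2) z * (-4:ℂ)^k := by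
    rw [Finset.mul_sum]
    apply Finset.sum_congr rfl
    intro k _
    rw [e4 k]; ring
  have hR2 : ∑ k ∈ range (n + 1), (-1 : ℂ) ^ k * 2 ^ (2 * k) *
        ((4 * n + 1).choose (4 * k) : ℂ) * bernoulliPoly (4 * k) z
      = ∑ k ∈ range (n+1), ((4*n+1).choose (4*k) : ℂ) * bernoulliPoly (4*k) z * (-4:ℂ)^k := by
    apply Finset.sum_congr rfl
    intro k _
    rw [e4 k]; ring
  rw [hL, hR1, hR2]
  -- instances of modfour
  have h4w1 : ((-1+I):ℂ)^4 = -4 := by linear_combination (I^2 - 4*I + 5) * hI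
  have h4w2 : ((-1-I):ℂ)^4 = -4 := by linear_combination (I^2 + 4*I + 5) * hI
  have h4u0 : ((2+2*I):ℂ)^4 = -64 := by linear_combination (16*I^2 + 64*I + 80) * hI
  have h4u1 : ((-2+2*I):ℂ)^4 = -64 := by linear_combination (16*I^2 - 64*I + 80) * hI
  have h4u2 : ((-2-2*I):ℂ)^4 = -64 := by linear_combination (16*I^2 + 64*I + 80) * hI
  have h4u3 : ((2-2*I):ℂ)^4 = -64 := by linear_combination (16*I^2 - 64*I + 80) * hI
  have hvw1 : ((-1+I):ℂ) * ((-1-I)/2) = 1 := by linear_combination (-1/2 : ℂ) * hI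
  have hvw2 : ((-1-I):ℂ) * ((-1+I)/2) = 1 := by linear_combination (-1/2 : ℂ) * hI
  have hvu0 : ((2+2*I):ℂ) * ((1-I)/4) = 1 := by linear_combination (-1/2 : ℂ) * hI
  have hvu1 : ((-2+2*I):ℂ) * ((-1-I)/4) = 1 := by linear_combination (-1/2 : ℂ) * hI
  have hvu2 : ((-2-2*I):ℂ) * ((-1+I)/4) = 1 := by linear_combination (-1/2 : ℂ) * hI
  have hvu3 : ((2-2*I):ℂ) * ((1+I)/4) = 1 := by linear_combination (-1/2 : ℂ) * hI
  have Ew1 := modfour n z (-1+I) ((-1-I)/2) (-4) h4w1 hvw1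
  have Ew2 := modfour n z (-1-I) ((-1+I)/2) (-4) h4w2 hvw2
  have Eu0 := modfour n (z/2) (2+2*I) ((1-I)/4) (-64) h4u0 hvu0
  have Eu1 := modfour n (z/2) (-2+2*I) ((-1-I)/4) (-64) h4u1 hvu1
  have Eu2 := modfour n (z/2) (-2-2*I) ((-1+I)/4) (-64) h4u2 hvu2
  have Eu3 := modfour n (z/2) (2-2*I) ((1+I)/4) (-64) h4u3 hvu3
  have hsig : ((-64:ℂ))^n = (-4)^n * 2^(4*n) := by
    rw [pow_mul, show ((2:ℂ))^4 = 16 from by norm_num, ← mul_pow]; norm_num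
  rw [hsig] at Eu0 Eu1 Eu2 Eu3
  -- multiplication theorem instances
  have hodd : Odd (4*n+1) := ⟨2*n, by ring⟩
  have M1 := bernoulliPoly_mul_two hodd (z/2 + (-1-I)/4)
  rw [show 2 * (z/2 + (-1-I)/4) = z + (-1-I)/2 from by ring,
    show z/2 + (-1-I)/4 + 1/2 = z/2 + (1-I)/4 from by ring,
    show 4*n+1-1 = 4*n from rfl] at M1
  have M2 := bernoulliPoly_mul_two hodd (z/2 + (-1+I)/4)
  rw [show 2 * (z/2 + (-1+I)/4) = z + (-1+I)/2 from by ring,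
    show z/2 + (-1+I)/4 + 1/2 = z/2 + (1+I)/4 from by ring,
    show 4*n+1-1 = 4*n from rfl] at M2
  linear_combination (-(1+I)/2) * Ew1 + ((I-1)/2) * Ew2
    - ((1-I)/4) * Eu0 + ((1+I)/4) * Eu1 + ((1-I)/4) * Eu2 - ((1+I)/4) * Eu3
    + ((-4:ℂ)^n) * M1 + ((-4:ℂ)^n) * M2
    + ((∑ k ∈ range (n+1), ((4*n+1).choose (4*k+1) : ℂ) * bernoulliPoly (4*k+1) z * (-4:ℂ)^k)
        - 2 * (∑ k ∈ range (n+1), ((4*n+1).choose (4*k+1) : ℂ) * bernoulliPoly (4*k+1) (z/2) * (-64:ℂ)^k)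
        - (1/2) * (-4:ℂ)^n * (bernoulliPoly (4*n+1) (z + (-1-I)/2) + bernoulliPoly (4*n+1) (z + (-1+I)/2))
        + (1/2) * (-4:ℂ)^n * 2^(4*n) * (bernoulliPoly (4*n+1) (z/2 + (1-I)/4)
            + bernoulliPoly (4*n+1) (z/2 + (-1-I)/4) + bernoulliPoly (4*n+1) (z/2 + (-1+I)/4)
            + bernoulliPoly (4*n+1) (z/2 + (1+I)/4))
        - (∑ k ∈ range n, ((4*n+1).choose (4*k+2) : ℂ) * bernoulliPoly (4*k+2) z * (-4:ℂ)^k)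
        + 8 * (1 - I^2) * (∑ k ∈ range n, ((4*n+1).choose (4*k+3) : ℂ) * bernoulliPoly (4*k+3) (z/2) * (-64:ℂ)^k)
        + (I^2 - 1) * (∑ k ∈ range n, ((4*n+1).choose (4*k+3) : ℂ) * bernoulliPoly (4*k+3) z * (-4:ℂ)^k)) * hI
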